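/- arXiv:1004.3621 — 3 statements merged into one kernel-verified Lean document; each statement's English description precedes it below -/
import Mathlib

section
/- With C_k = B_{2k}/(2k)! (B_{2k} the Bernoulli numbers), for every k ≥ 1: C_k + C_{k-1}/(3!·4) + C_{k-2}/(5!·4²) + ⋯ + C₁/((2k−1)!·4^{k−1}) = 2k/((2k+1)!·4^k). -/
open Finset

lemma bern_comp_one_sub (n : ℕ) :
    (Polynomial.bernoulli n).comp (1 - Polynomial.X) = (-1:ℚ)^n • Polynomial.bernoulli n := by
  induction n with
  | zero => simp
  | succ n ih =>
    have hd : Polynomial.derivative ((Polynomial.bernoulli (n+1)).comp (1 - Polynomial.X)) =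
        Polynomial.derivative ((-1:ℚ)^(n+1) • Polynomial.bernoulli (n+1)) := by
      rw [Polynomial.derivative_comp_one_sub_X, Polynomial.derivative_smul,
        Polynomial.derivative_bernoulli_add_one, Polynomial.mul_comp, ih]
      simp [Polynomial.smul_eq_C_mul]
      ring
    have hc := Polynomial.eq_C_of_derivative_eq_zero
      (p := (Polynomial.bernoulli (n+1)).comp (1 - Polynomial.X) -
            (-1:ℚ)^(n+1) • Polynomial.bernoulli (n+1))
      (by rw [Polynomial.derivative_sub, hd, sub_self])
    have h1 : (((Polynomial.bernoulli (n+1)).comp (1 - Polynomial.X)) -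
        (-1:ℚ)^(n+1) • Polynomial.bernoulli (n+1)).eval 1 = 0 := by
      simp [Polynomial.eval_comp, bernoulli'_eq_bernoulli, ← mul_assoc, ← mul_pow]
    rw [hc, Polynomial.eval_C] at h1
    rw [h1, map_zero] at hc
    exact sub_eq_zero.mp hc

lemma bern_eval_half_odd (k : ℕ) : (Polynomial.bernoulli (2*k+1)).eval (1/2 : ℚ) = 0 := by
  have h := congrArg (Polynomial.eval (1/2 : ℚ)) (bern_comp_one_sub (2*k+1))
  rw [Polynomial.eval_comp] at h
  simp [pow_succ, pow_mul] at h
  linarith [h]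

lemma sum_range_two_mul' (m : ℕ) (f : ℕ → ℚ) :
    ∑ j ∈ range (2*m), f j = ∑ i ∈ range m, (f (2*i) + f (2*i+1)) := by
  induction m with
  | zero => simp
  | succ m ih =>
    rw [show 2*(m+1) = 2*m+1+1 by ring, sum_range_succ, sum_range_succ, ih, sum_range_succ]
    ring

lemma key_sum (k : ℕ) :
    ∑ i ∈ range (k+1), bernoulli (2*i) * ((2*k+1).choose (2*i)) * (4:ℚ)^i = 2*(k:ℚ)+1 := by
  have h0 := bern_eval_half_odd k
  rw [Polynomial.bernoulli, Polynomial.eval_finset_sum] at h0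
  simp only [Polynomial.eval_monomial] at h0
  have h2 : ∑ i ∈ range (2*k+1+1), bernoulli i * ((2*k+1).choose i) * (2:ℚ)^i = 0 := by
    have hc : ∑ i ∈ range (2*k+1+1), bernoulli i * ((2*k+1).choose i) * (2:ℚ)^i
        = (∑ i ∈ range (2*k+1+1),
            bernoulli i * ((2*k+1).choose i) * (1/2:ℚ)^(2*k+1-i)) * 2^(2*k+1) := by
      rw [Finset.sum_mul]
      refine Finset.sum_congr rfl fun i hi => ?_
      rw [Finset.mem_range] at hi
      have hpow : (2:ℚ)^(2*k+1) = 2^(2*k+1-i) * 2^i := by rw [← pow_add]; congr 1; omega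
      rw [hpow, one_div, inv_pow]
      have h2ne : ((2:ℚ)^(2*k+1-i)) ≠ 0 := by positivity
      field_simp
    rw [hc, h0, zero_mul]
  rw [show 2*k+1+1 = 2*(k+1) by ring, sum_range_two_mul', Finset.sum_add_distrib] at h2
  have hodd : ∑ i ∈ range (k+1),
      bernoulli (2*i+1) * ((2*k+1).choose (2*i+1)) * (2:ℚ)^(2*i+1) = -(2*(k:ℚ)+1) := by
    rw [Finset.sum_range_succ']
    have hz : ∀ i ∈ range k,
        bernoulli (2*(i+1)+1) * ((2*k+1).choose (2*(i+1)+1)) * (2:ℚ)^(2*(i+1)+1) = 0 := by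
      intro i _
      have hb : bernoulli (2*(i+1)+1) = 0 := by
        rw [bernoulli_eq_bernoulli'_of_ne_one (by omega)]
        exact bernoulli'_eq_zero_of_odd ⟨i+1, by ring⟩ (by omega)
      rw [hb, zero_mul, zero_mul]
    rw [Finset.sum_congr rfl hz]
    simp [bernoulli_one, Nat.choose_one_right]
    ring
  have heven : ∑ i ∈ range (k+1),
      bernoulli (2*i) * ((2*k+1).choose (2*i)) * (2:ℚ)^(2*i) = 2*(k:ℚ)+1 := by
    rw [hodd] at h2; linarith
  rw [← heven]
  refine Finset.sum_congr rfl fun i _ => ?_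
  rw [pow_mul]
  norm_num

theorem bernoulli_stable_recurrence (k : ℕ) (hk : 1 ≤ k) :
    ∑ i ∈ Finset.Icc 1 k,
        ((bernoulli (2 * i) : ℝ) / (Nat.factorial (2 * i))) /
          ((Nat.factorial (2 * (k - i) + 1)) * 4 ^ (k - i)) =
      2 * (k : ℝ) / ((Nat.factorial (2 * k + 1)) * 4 ^ k) := by
  have hterm : ∀ i ∈ Finset.Icc 1 k,
      ((bernoulli (2 * i) : ℝ) / (Nat.factorial (2 * i))) /
          ((Nat.factorial (2 * (k - i) + 1)) * 4 ^ (k - i)) =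
      (bernoulli (2 * i) : ℝ) * ((2*k+1).choose (2*i)) * 4^i /
          ((Nat.factorial (2 * k + 1)) * 4 ^ k) := by
    intro i hi
    rw [Finset.mem_Icc] at hi
    have hfac : ((2*k+1).choose (2*i)) * (2*i).factorial * (2*(k-i)+1).factorial
        = (2*k+1).factorial := by
      rw [show 2*(k-i)+1 = 2*k+1 - 2*i by omega]
      exact Nat.choose_mul_factorial_mul_factorial (by omega)
    have hfacR : (((2*k+1).choose (2*i)) : ℝ) * (2*i).factorial * (2*(k-i)+1).factorial
        = (2*k+1).factorial := by exact_mod_cast congrArg (Nat.cast (R := ℝ)) hfac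
    have h4 : (4:ℝ)^i * 4^(k-i) = 4^k := by rw [← pow_add]; congr 1; omega
    rw [div_div, div_eq_div_iff (by positivity) (by positivity), ← h4, ← hfacR]
    ring
  rw [Finset.sum_congr rfl hterm, ← Finset.sum_div]
  congr 1
  have hkey : ((∑ i ∈ range (k+1), bernoulli (2*i) * ((2*k+1).choose (2*i)) * (4:ℚ)^i : ℚ) : ℝ)
      = 2*(k:ℝ)+1 := by rw [key_sum]; push_cast; ring
  push_cast at hkey
  have hsplit : ∑ i ∈ range (k+1),
      (bernoulli (2*i) : ℝ) * ((2*k+1).choose (2*i)) * (4:ℝ)^i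
      = 1 + ∑ i ∈ Finset.Icc 1 k,
        (bernoulli (2*i) : ℝ) * ((2*k+1).choose (2*i)) * (4:ℝ)^i := by
    rw [Finset.range_eq_Ico, Finset.sum_eq_sum_Ico_succ_bot (by omega)]
    simp [← Finset.Ico_add_one_right_eq_Icc]
  rw [hsplit] at hkey
  have : ∑ i ∈ Finset.Icc 1 k,
      (bernoulli (2*i) : ℝ) * ((2*k+1).choose (2*i)) * (4:ℝ)^i = 2*(k:ℝ) := by linarith
  rw [this]
end

section
/- For all real x, Σ_{j=1}^∞ x^j(−1)^{j−1}/(j!·j) = e^{−x}·Σ_{j=1}^∞ H_j x^j/j!, where H_j = Σ_{m=1}^j 1/m is the j-th harmonic number; equivalently ∫_0^x (1−e^{−u})/u du = e^{−x} Σ_{j=1}^∞ H_j x^j/j!. -/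
open scoped Nat

namespace HST

noncomputable def S (b : ℕ → ℝ) (x : ℝ) : ℝ := ∑' j : ℕ, b j * x ^ (j + 1)

lemma summable_pow {b : ℕ → ℝ} (hb : ∀ j, |b j| ≤ 1 / (j ! : ℝ)) (x : ℝ) :
    Summable fun j : ℕ => b j * x ^ (j + 1) := by
  apply Summable.of_norm_bounded (g := fun j => |x| * (|x| ^ j / j !))
    ((Real.summable_pow_div_factorial |x|).mul_left _)
  intro j
  rw [Real.norm_eq_abs, abs_mul, abs_pow, pow_succ]
  calc |b j| * (|x| ^ j * |x|) ≤ (1 / j !) * (|x| ^ j * |x|) :=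
        mul_le_mul_of_nonneg_right (hb j) (by positivity)
    _ = |x| * (|x| ^ j / j !) := by ring

lemma summable_u (R : ℝ) (hR : 0 ≤ R) :
    Summable fun j : ℕ => ((j : ℝ) + 1) * R ^ j / j ! := by
  refine Summable.of_nonneg_of_le (fun j => by positivity) ?_
    ((Real.summable_pow_div_factorial (2 * R)).mul_left 2)
  intro j
  have h0 : (j : ℕ) + 1 ≤ 2 ^ j := Nat.lt_two_pow_self
  have h1 : ((j : ℝ) + 1) ≤ 2 * 2 ^ j := by
    have : ((j : ℝ) + 1) ≤ 2 ^ j := by exact_mod_cast h0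
    nlinarith [pow_pos (by norm_num : (0:ℝ) < 2) j]
  rw [mul_pow, show 2 * ((2:ℝ) ^ j * R ^ j / (j ! : ℝ)) = (2 * 2 ^ j) * R ^ j / j ! from by ring]
  gcongr

lemma hasDerivAt_S {b : ℕ → ℝ} (hb : ∀ j, |b j| ≤ 1 / (j ! : ℝ)) (x : ℝ) :
    HasDerivAt (S b) (∑' j : ℕ, ((j : ℝ) + 1) * b j * x ^ j) x := by
  set R : ℝ := |x| + 1 with hR
  have hR0 : 0 ≤ R := by positivity
  have hxR : x ∈ Metric.ball (0:ℝ) R := by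
    have : dist x 0 < R := by rw [Real.dist_eq, sub_zero]; linarith [lt_add_one |x|]
    exact Metric.mem_ball.mpr this
  have key := hasDerivAt_tsum_of_isPreconnected
    (u := fun j : ℕ => ((j : ℝ) + 1) * R ^ j / j !)
    (g := fun j y => b j * y ^ (j + 1))
    (g' := fun j y => b j * (((j : ℝ) + 1) * y ^ j))
    (summable_u R hR0) Metric.isOpen_ball (convex_ball (0:ℝ) R).isPreconnected
    (fun n y _ => by
      have h := (hasDerivAt_pow (n + 1) y).const_mul (b n)
      convert h using 1
      · rfl
      push_cast [Nat.add_sub_cancel]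
      ring)
    (fun n y hy => by
      have hyR : |y| ≤ R := by
        have := Metric.mem_ball.mp hy
        rw [Real.dist_eq, sub_zero] at this
        linarith
      rw [Real.norm_eq_abs, abs_mul, abs_mul, abs_pow]
      have h1 : |((n:ℝ)+1)| = (n:ℝ)+1 := abs_of_nonneg (by positivity)
      rw [h1]
      calc |b n| * (((n:ℝ)+1) * |y| ^ n) ≤ (1 / n !) * (((n:ℝ)+1) * R ^ n) := by
            apply mul_le_mul (hb n) (mul_le_mul_of_nonneg_left (pow_le_pow_left₀ (abs_nonneg y) hyR n) (by positivity)) (by positivity) (by positivity)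
        _ = ((n:ℝ)+1) * R ^ n / n ! := by ring)
    hxR (summable_pow hb x) hxR
  have heq : (∑' j : ℕ, ((j:ℝ)+1) * b j * x ^ j) = ∑' j : ℕ, b j * (((j:ℝ)+1) * x ^ j) :=
    tsum_congr fun j => by ring
  rw [heq]
  exact key

end HST

namespace HST2
open HST

noncomputable def H (n : ℕ) : ℝ := ∑ m ∈ Finset.Icc 1 n, (1 : ℝ) / m

noncomputable def bF (j : ℕ) : ℝ := (-1 : ℝ) ^ j / (((j+1)! : ℝ) * ((j:ℝ) + 1))
noncomputable def bG (j : ℕ) : ℝ := H (j + 1) / ((j+1)! : ℝ)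
noncomputable def bD (j : ℕ) : ℝ := (-1 : ℝ) ^ (j + 1) / ((j+2)! : ℝ)
noncomputable def bE (j : ℕ) : ℝ := 1 / ((j+2)! : ℝ)
noncomputable def D (x : ℝ) : ℝ := ∑' j : ℕ, (-1:ℝ) ^ j * x ^ j / ((j+1)! : ℝ)
noncomputable def Ep (x : ℝ) : ℝ := ∑' j : ℕ, x ^ j / ((j+1)! : ℝ)

lemma fact_le (j k : ℕ) (h : j ≤ k) : (j ! : ℝ) ≤ (k ! : ℝ) := by
  exact_mod_cast Nat.factorial_le h

lemma hbF : ∀ j, |bF j| ≤ 1 / (j ! : ℝ) := by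
  intro j
  rw [bF, abs_div, abs_pow, abs_neg, abs_one, one_pow,
    abs_of_pos (show (0:ℝ) < ((j+1)! : ℝ) * ((j:ℝ) + 1) by positivity)]
  apply one_div_le_one_div_of_le (by positivity)
  have h1 : (j ! : ℝ) ≤ ((j+1)! : ℝ) := fact_le _ _ (Nat.le_succ j)
  have h2 : (0:ℝ) < ((j+1)! : ℝ) := by positivity
  have h3 : (0:ℝ) ≤ (j:ℝ) := Nat.cast_nonneg j
  nlinarith

lemma H_nonneg (n : ℕ) : 0 ≤ H n := Finset.sum_nonneg fun m _ => by positivity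

lemma H_le (n : ℕ) : H n ≤ n := by
  calc H n ≤ (Finset.Icc 1 n).card • (1:ℝ) := by
        apply Finset.sum_le_card_nsmul
        intro m hm
        have h1 : 1 ≤ m := (Finset.mem_Icc.mp hm).1
        have : (1:ℝ) ≤ m := by exact_mod_cast h1
        rw [div_le_one (by linarith)]; exact this
    _ = n := by simp [Nat.card_Icc]

lemma hbG : ∀ j, |bG j| ≤ 1 / (j ! : ℝ) := by
  intro j
  rw [bG, abs_div, abs_of_nonneg (H_nonneg _),
    abs_of_pos (show (0:ℝ) < ((j+1)! : ℝ) by positivity)]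
  have h1 : H (j+1) ≤ (j:ℝ) + 1 := by
    have := H_le (j+1); push_cast at this; linarith
  have h2 : ((j+1)! : ℝ) = ((j:ℝ)+1) * (j ! : ℝ) := by
    rw [Nat.factorial_succ]; push_cast; ring
  rw [h2, div_le_div_iff₀ (by positivity) (by positivity)]
  have h3 : (0:ℝ) < (j ! : ℝ) := by positivity
  nlinarith

lemma hbD : ∀ j, |bD j| ≤ 1 / (j ! : ℝ) := by
  intro j
  rw [bD, abs_div, abs_pow, abs_neg, abs_one, one_pow,
    abs_of_pos (show (0:ℝ) < ((j+2)! : ℝ) by positivity)]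
  exact one_div_le_one_div_of_le (by positivity) (fact_le _ _ (by omega))

lemma hbE : ∀ j, |bE j| ≤ 1 / (j ! : ℝ) := by
  intro j
  rw [bE, abs_div, abs_one,
    abs_of_pos (show (0:ℝ) < ((j+2)! : ℝ) by positivity)]
  exact one_div_le_one_div_of_le (by positivity) (fact_le _ _ (by omega))

lemma summable_D (x : ℝ) : Summable fun j : ℕ => (-1:ℝ) ^ j * x ^ j / ((j+1)! : ℝ) := by
  apply Summable.of_norm_bounded (Real.summable_pow_div_factorial |x|)
  intro j
  rw [Real.norm_eq_abs, abs_div, abs_mul, abs_pow, abs_pow, abs_neg, abs_one, one_pow, one_mul,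
    abs_of_pos (show (0:ℝ) < ((j+1)! : ℝ) by positivity)]
  gcongr
  omega

lemma summable_Ep (x : ℝ) : Summable fun j : ℕ => x ^ j / ((j+1)! : ℝ) := by
  apply Summable.of_norm_bounded (Real.summable_pow_div_factorial |x|)
  intro j
  rw [Real.norm_eq_abs, abs_div, abs_pow,
    abs_of_pos (show (0:ℝ) < ((j+1)! : ℝ) by positivity)]
  gcongr
  omega

lemma D_eq (x : ℝ) : D x = 1 + S bD x := by
  rw [D, Summable.tsum_eq_zero_add (summable_D x)]
  congr 1
  · norm_num
  · rw [S]
    apply tsum_congr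
    intro j
    rw [bD]
    ring

lemma continuous_D : Continuous D := by
  have h : D = fun x => 1 + S bD x := funext D_eq
  rw [h]
  exact continuous_const.add (continuous_iff_continuousAt.mpr fun x =>
    (hasDerivAt_S hbD x).continuousAt)

lemma exp_tsum (y : ℝ) : Real.exp y = ∑' n : ℕ, y ^ n / (n ! : ℝ) := by
  rw [Real.exp_eq_exp_ℝ, NormedSpace.exp_eq_tsum_div]

lemma exp_shift (y : ℝ) : Real.exp y = 1 + ∑' n : ℕ, y ^ (n+1) / ((n+1)! : ℝ) := by
  rw [exp_tsum, Summable.tsum_eq_zero_add (Real.summable_pow_div_factorial y)]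
  norm_num

lemma D_closed (u : ℝ) : (if u = 0 then (1:ℝ) else (1 - Real.exp (-u)) / u) = D u := by
  split_ifs with h
  · subst h
    rw [D, tsum_eq_single 0 (fun b hb => by
      rw [zero_pow hb, mul_zero, zero_div])]
    norm_num
  · have hx : u * D u = 1 - Real.exp (-u) := by
      rw [D, ← tsum_mul_left]
      have hterm : ∀ j : ℕ, u * ((-1:ℝ) ^ j * u ^ j / ((j+1)! : ℝ)) =
          -((-u) ^ (j+1) / ((j+1)! : ℝ)) := by
        intro j
        rw [neg_pow, pow_succ]
        ring
      rw [tsum_congr hterm, tsum_neg]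
      have he := exp_shift (-u)
      linarith
    rw [← hx, mul_div_cancel_left₀ _ h]

lemma Ep_eq (x : ℝ) : Ep x = 1 + S bE x := by
  rw [Ep, Summable.tsum_eq_zero_add (summable_Ep x)]
  congr 1
  · norm_num
  · rw [S]
    apply tsum_congr
    intro j
    rw [bE]
    ring

lemma D_zero : D 0 = 1 := by
  have := D_closed 0
  simpa using this.symm

lemma expEp (x : ℝ) : Real.exp (-x) * Ep x = D x := by
  rcases eq_or_ne x 0 with h | h
  · subst h
    have hEp : Ep 0 = 1 := by
      rw [Ep, tsum_eq_single 0 (fun b hb => by rw [zero_pow hb, zero_div])]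
      norm_num
    rw [hEp, D_zero]
    norm_num
  · have hEpx : x * Ep x = Real.exp x - 1 := by
      rw [Ep, ← tsum_mul_left]
      have hterm : ∀ j : ℕ, x * (x ^ j / ((j+1)! : ℝ)) = x ^ (j+1) / ((j+1)! : ℝ) := by
        intro j; rw [pow_succ]; ring
      rw [tsum_congr hterm]
      have he := exp_shift x
      linarith
    have hDx : D x = (1 - Real.exp (-x)) / x := by
      have := D_closed x
      rw [if_neg h] at this
      exact this.symm
    have hEp2 : Ep x = (Real.exp x - 1) / x := by
      field_simp at hEpx ⊢
      linarith
    rw [hDx, hEp2, Real.exp_neg]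
    have h0 := Real.exp_ne_zero x
    field_simp

lemma summable_G1 (x : ℝ) : Summable fun j : ℕ => H (j+1) * x ^ j / (j ! : ℝ) := by
  apply Summable.of_norm_bounded (summable_u |x| (abs_nonneg x))
  intro j
  rw [Real.norm_eq_abs, abs_div, abs_mul, abs_pow,
    abs_of_pos (show (0:ℝ) < (j ! : ℝ) by positivity),
    abs_of_nonneg (H_nonneg _)]
  gcongr
  have := H_le (j+1); push_cast at this; linarith

lemma H_succ (n : ℕ) : H (n + 1) = H n + 1 / ((n : ℝ) + 1) := by
  rw [H, H, Finset.sum_Icc_succ_top (by omega)]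
  push_cast
  ring

lemma deriv_bG_eq (x : ℝ) :
    (∑' j : ℕ, ((j : ℝ) + 1) * bG j * x ^ j) = Ep x + S bG x := by
  have hterm : ∀ j : ℕ, ((j : ℝ) + 1) * bG j * x ^ j = H (j+1) * x ^ j / (j ! : ℝ) := by
    intro j
    rw [bG]
    have h2 : ((j+1)! : ℝ) = ((j:ℝ)+1) * (j ! : ℝ) := by
      rw [Nat.factorial_succ]; push_cast; ring
    rw [h2]
    have h3 : (0:ℝ) < (j ! : ℝ) := by positivity
    field_simp
  rw [tsum_congr hterm, Summable.tsum_eq_zero_add (summable_G1 x)]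
  have hterm2 : ∀ j : ℕ, H (j+1+1) * x ^ (j+1) / ((j+1)! : ℝ) =
      bG j * x ^ (j+1) + bE j * x ^ (j+1) := by
    intro j
    rw [H_succ (j+1), bG, bE]
    have h2 : ((j+2)! : ℝ) = ((j:ℝ)+2) * ((j+1)! : ℝ) := by
      rw [show j+2 = (j+1)+1 from rfl, Nat.factorial_succ]; push_cast; ring
    have h3 : (0:ℝ) < ((j+1)! : ℝ) := by positivity
    have h4 : (0:ℝ) < ((j+2)! : ℝ) := by positivity
    rw [h2] at h4 ⊢
    push_cast
    field_simp
    ring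
  rw [tsum_congr hterm2, Summable.tsum_add (summable_pow hbG x) (summable_pow hbE x),
    Ep_eq, S, S]
  have hH1 : H 1 = 1 := by simp [H]
  rw [hH1]
  norm_num
  ring

lemma S_zero (b : ℕ → ℝ) : S b 0 = 0 := by
  rw [S]
  convert tsum_zero with j
  simp

lemma hFd (t : ℝ) : HasDerivAt (S bF) (D t) t := by
  have h := hasDerivAt_S hbF t
  have heq : (∑' j : ℕ, ((j : ℝ) + 1) * bF j * t ^ j) = D t := by
    rw [D]
    apply tsum_congr
    intro j
    rw [bF]
    have h1 : (0:ℝ) < ((j+1)! : ℝ) := by positivity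
    have h2 : (0:ℝ) < (j:ℝ) + 1 := by positivity
    field_simp
  rwa [heq] at h

lemma hHd (t : ℝ) : HasDerivAt (fun y => Real.exp (-y) * S bG y) (D t) t := by
  have h1 := ((hasDerivAt_neg t).exp).mul (hasDerivAt_S hbG t)
  have heq : Real.exp (-t) * -1 * S bG t +
      Real.exp (-t) * (∑' j : ℕ, ((j : ℝ) + 1) * bG j * t ^ j) = D t := by
    rw [deriv_bG_eq, ← expEp t]
    ring
  rwa [heq] at h1

lemma key (x : ℝ) : S bF x = Real.exp (-x) * S bG x ∧
    (∫ u in (0:ℝ)..x, D u) = Real.exp (-x) * S bG x := by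
  have hint : IntervalIntegrable D MeasureTheory.volume 0 x :=
    continuous_D.intervalIntegrable 0 x
  have e1 : (∫ u in (0:ℝ)..x, D u) = S bF x - S bF 0 :=
    intervalIntegral.integral_eq_sub_of_hasDerivAt (fun t _ => hFd t) hint
  have e2 : (∫ u in (0:ℝ)..x, D u) =
      Real.exp (-x) * S bG x - Real.exp (-0) * S bG 0 :=
    intervalIntegral.integral_eq_sub_of_hasDerivAt (fun t _ => hHd t) hint
  rw [S_zero, sub_zero] at e1
  rw [S_zero, mul_zero, sub_zero] at e2
  exact ⟨e1 ▸ e2 ▸ rfl, e2⟩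

end HST2

theorem harmonic_series_transformation (x : ℝ) :
    (∑' j : ℕ, x ^ (j + 1) * (-1 : ℝ) ^ j / ((Nat.factorial (j + 1)) * (j + 1)) =
      Real.exp (-x) *
        ∑' j : ℕ, (∑ m ∈ Finset.Icc 1 (j + 1), (1 : ℝ) / m) * x ^ (j + 1) /
          (Nat.factorial (j + 1))) ∧
    (∫ u in (0:ℝ)..x, (if u = 0 then 1 else (1 - Real.exp (-u)) / u)) =
      Real.exp (-x) *
        ∑' j : ℕ, (∑ m ∈ Finset.Icc 1 (j + 1), (1 : ℝ) / m) * x ^ (j + 1) /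
          (Nat.factorial (j + 1)) := by
  obtain ⟨h1, h2⟩ := HST2.key x
  have hL : (∑' j : ℕ, x ^ (j + 1) * (-1 : ℝ) ^ j /
      ((Nat.factorial (j + 1)) * (j + 1))) = HST.S HST2.bF x := by
    rw [HST.S]
    apply tsum_congr
    intro j
    rw [HST2.bF]
    push_cast
    ring
  have hR : (∑' j : ℕ, (∑ m ∈ Finset.Icc 1 (j + 1), (1 : ℝ) / m) * x ^ (j + 1) /
      (Nat.factorial (j + 1))) = HST.S HST2.bG x := by
    rw [HST.S]
    apply tsum_congr
    intro j
    rw [HST2.bG, HST2.H]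
    ring
  constructor
  · rw [hL, hR]; exact h1
  · rw [hR]
    rw [show (∫ u in (0:ℝ)..x, (if u = 0 then 1 else (1 - Real.exp (-u)) / u)) =
      ∫ u in (0:ℝ)..x, HST2.D u from by simp only [HST2.D_closed]]
    exact h2
end

section
/- Let a₀ = 1, b₀ = cos φ with 0 < φ < π/2, and let (a_j), (b_j) be the AGM iteration a_{j+1} = (a_j+b_j)/2, b_{j+1} = √(a_j b_j), with common limit a = lim a_j = lim b_j. Then 2a·K(φ) = π, where K(φ) = ∫_0^{π/2} (1 − sin²φ·sin²θ)^{-1/2} dθ. -/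
open MeasureTheory Real Set Filter

noncomputable def Fker (x y θ : ℝ) : ℝ := (Real.sqrt (x^2 * Real.cos θ^2 + y^2 * Real.sin θ^2))⁻¹
noncomputable def Gker (x y t : ℝ) : ℝ := (Real.sqrt ((t^2+x^2)*(t^2+y^2)))⁻¹
noncomputable def Jint (x y : ℝ) : ℝ := ∫ θ in Ioo 0 (π/2), Fker x y θ

lemma Fker_cont {x y : ℝ} (hx : 0 < x) (hy : 0 < y) : Continuous (Fker x y) := by
  have h : ∀ θ : ℝ, 0 < x^2 * Real.cos θ^2 + y^2 * Real.sin θ^2 := by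
    intro θ
    nlinarith [Real.sin_sq_add_cos_sq θ, sq_nonneg (Real.cos θ), sq_nonneg (Real.sin θ),
      sq_nonneg (x * Real.cos θ), sq_nonneg (y * Real.sin θ), mul_pos (mul_pos hx hx) (mul_pos hy hy)]
  apply Continuous.inv₀
  · exact (Real.continuous_sqrt.comp (by continuity))
  · intro θ; exact (Real.sqrt_pos.2 (h θ)).ne'

lemma Fker_integrable {x y : ℝ} (hx : 0 < x) (hy : 0 < y) :
    IntegrableOn (Fker x y) (Ioo 0 (π/2)) :=
  ((Fker_cont hx hy).integrableOn_Icc (a := 0) (b := π/2)).mono_set Ioo_subset_Icc_self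

lemma image_ytan {y : ℝ} (hy : 0 < y) :
    (fun θ => y * Real.tan θ) '' Ioo 0 (π/2) = Ioi 0 := by
  ext u
  constructor
  · rintro ⟨θ, ⟨h1, h2⟩, rfl⟩
    exact mul_pos hy (Real.tan_pos_of_pos_of_lt_pi_div_two h1 h2)
  · intro hu
    have hpos : (0:ℝ) < Real.arctan (u / y) := by
      have := Real.arctan_strictMono (show (0:ℝ) < u / y from div_pos hu hy)
      rwa [Real.arctan_zero] at this
    refine ⟨Real.arctan (u / y), ⟨hpos, Real.arctan_lt_pi_div_two _⟩, ?_⟩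
    show y * Real.tan (Real.arctan (u / y)) = u
    rw [Real.tan_arctan]
    field_simp

lemma ytan_deriv {x y : ℝ} (hy : 0 < y) :
    ∀ θ ∈ Ioo (0:ℝ) (π/2), HasDerivWithinAt (fun θ => y * Real.tan θ)
      ((fun θ => y / Real.cos θ ^ 2) θ) (Ioo 0 (π/2)) θ := by
  intro θ ⟨h1, h2⟩
  have hc : Real.cos θ ≠ 0 :=
    (Real.cos_pos_of_mem_Ioo ⟨by linarith [Real.pi_pos], h2⟩).ne'
  have := (Real.hasDerivAt_tan hc).const_mul y
  simpa [div_eq_mul_inv, mul_comm] using this.hasDerivWithinAt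

lemma ytan_inj {y : ℝ} (hy : 0 < y) : InjOn (fun θ => y * Real.tan θ) (Ioo 0 (π/2)) := by
  intro θ1 h1 θ2 h2 h
  have : Real.tan θ1 = Real.tan θ2 := by
    exact mul_left_cancel₀ hy.ne' h
  exact Real.injOn_tan (Ioo_subset_Ioo (by linarith [Real.pi_pos]) le_rfl h1)
    (Ioo_subset_Ioo (by linarith [Real.pi_pos]) le_rfl h2) this

lemma ytan_pointwise {x y : ℝ} (hx : 0 < x) (hy : 0 < y) :
    ∀ θ ∈ Ioo (0:ℝ) (π/2),
      (fun θ => |y / Real.cos θ ^ 2| • Gker x y (y * Real.tan θ)) θ = Fker x y θ := by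
  intro θ ⟨h1, h2⟩
  have hc : 0 < Real.cos θ := Real.cos_pos_of_mem_Ioo ⟨by linarith [Real.pi_pos], h2⟩
  have hc2 : (0:ℝ) < Real.cos θ ^ 2 := by positivity
  have htan : Real.tan θ = Real.sin θ / Real.cos θ := Real.tan_eq_sin_div_cos θ
  have hP : 0 < x^2 * Real.cos θ^2 + y^2 * Real.sin θ^2 := by positivity
  have key1 : (y * Real.tan θ)^2 + x^2 =
      (x^2 * Real.cos θ^2 + y^2 * Real.sin θ^2) / Real.cos θ ^ 2 := by
    rw [htan]; field_simp; ring
  have key2 : (y * Real.tan θ)^2 + y^2 = y^2 / Real.cos θ ^ 2 := by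
    rw [htan]; field_simp
    nlinarith [Real.sin_sq_add_cos_sq θ]
  simp only [Gker, Fker, smul_eq_mul, key1, key2]
  have key3 : (x^2 * Real.cos θ^2 + y^2 * Real.sin θ^2) / Real.cos θ ^ 2 * (y^2 / Real.cos θ ^ 2)
      = (x^2 * Real.cos θ^2 + y^2 * Real.sin θ^2) * (y / Real.cos θ ^ 2)^2 := by
    field_simp
  rw [key3, Real.sqrt_mul hP.le, Real.sqrt_sq (by positivity)]
  rw [abs_of_pos (by positivity)]
  have hsP : 0 < Real.sqrt (x^2 * Real.cos θ^2 + y^2 * Real.sin θ^2) := Real.sqrt_pos.2 hP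
  field_simp

lemma JT {x y : ℝ} (hx : 0 < x) (hy : 0 < y) :
    (∫ t in Ioi (0:ℝ), Gker x y t) = Jint x y := by
  rw [Jint, ← image_ytan hy]
  rw [integral_image_eq_integral_abs_deriv_smul measurableSet_Ioo
    (ytan_deriv (x := x) hy) (ytan_inj hy) (Gker x y)]
  exact setIntegral_congr_fun measurableSet_Ioo (ytan_pointwise hx hy)

lemma Gker_integrable {x y : ℝ} (hx : 0 < x) (hy : 0 < y) :
    IntegrableOn (Gker x y) (Ioi 0) := by
  rw [← image_ytan hy,
    integrableOn_image_iff_integrableOn_abs_deriv_smul measurableSet_Ioo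
      (ytan_deriv (x := x) hy) (ytan_inj hy) (Gker x y)]
  exact (Fker_integrable hx hy).congr_fun (fun θ hθ => (ytan_pointwise hx hy θ hθ).symm)
    measurableSet_Ioo

lemma Gker_inv {x y t : ℝ} (hx : 0 < x) (hy : 0 < y) (ht : 0 < t) :
    (x*y/t^2) * Gker x y (x*y/t) = Gker x y t := by
  unfold Gker
  have k1 : (x*y/t)^2 + x^2 = x^2 * ((t^2+y^2)/t^2) := by field_simp; ring
  have k2 : (x*y/t)^2 + y^2 = y^2 * ((t^2+x^2)/t^2) := by field_simp; ring
  have hP : (0:ℝ) < (t^2+x^2)*(t^2+y^2) := by positivity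
  have k3 : x^2 * ((t^2+y^2)/t^2) * (y^2 * ((t^2+x^2)/t^2)) =
      ((t^2+x^2)*(t^2+y^2)) * (x*y/t^2)^2 := by field_simp
  rw [k1, k2, k3, Real.sqrt_mul hP.le, Real.sqrt_sq (by positivity)]
  have h4 : 0 < Real.sqrt ((t^2+x^2)*(t^2+y^2)) := Real.sqrt_pos.2 hP
  field_simp

lemma image_inv_map {x y : ℝ} (hx : 0 < x) (hy : 0 < y) :
    (fun t => x*y/t) '' Ioo 0 (Real.sqrt (x*y)) = Ioi (Real.sqrt (x*y)) := by
  have hG : 0 < Real.sqrt (x*y) := Real.sqrt_pos.2 (by positivity)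
  have hG2 : Real.sqrt (x*y) ^ 2 = x*y := Real.sq_sqrt (by positivity)
  set G := Real.sqrt (x*y) with hGdef
  have hGG : G * G = x * y := by nlinarith
  ext u
  constructor
  · rintro ⟨t, ⟨h1, h2⟩, rfl⟩
    show G < x*y/t
    rw [lt_div_iff₀ h1]
    nlinarith
  · intro hu
    have hu' : 0 < u := hG.trans hu
    have hGu : G < u := hu
    refine ⟨x*y/u, ⟨by positivity, ?_⟩, by field_simp⟩
    rw [div_lt_iff₀ hu']
    nlinarith

lemma Ghalf {x y : ℝ} (hx : 0 < x) (hy : 0 < y) :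
    (∫ t in Ioi (Real.sqrt (x*y)), Gker x y t) = ∫ t in Ioo 0 (Real.sqrt (x*y)), Gker x y t := by
  rw [← image_inv_map hx hy]
  rw [integral_image_eq_integral_abs_deriv_smul measurableSet_Ioo
    (f' := fun t => -(x*y)/t^2) ?_ ?_ (Gker x y)]
  · apply setIntegral_congr_fun measurableSet_Ioo
    intro t ⟨h1, h2⟩
    have : |-(x*y)/t^2| = x*y/t^2 := by rw [abs_div, abs_neg, abs_of_pos (by positivity),
      abs_of_pos (by positivity)]
    simp only [smul_eq_mul, this, Gker_inv hx hy h1]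
  · intro t ⟨h1, h2⟩
    have : HasDerivAt (fun t => x*y/t) (-(x*y)/t^2) t := by
      have := (hasDerivAt_inv h1.ne').const_mul (x*y)
      simpa [div_eq_mul_inv, neg_div, mul_comm, mul_assoc] using this
    exact this.hasDerivWithinAt
  · intro t1 ⟨h1, _⟩ t2 ⟨h2, _⟩ h
    field_simp at h
    exact h.symm

lemma Ioi_split {x y : ℝ} (hx : 0 < x) (hy : 0 < y) :
    (∫ t in Ioi (0:ℝ), Gker x y t) = 2 * ∫ t in Ioi (Real.sqrt (x*y)), Gker x y t := by
  have hint := Gker_integrable hx hy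
  have hG : 0 < Real.sqrt (x*y) := Real.sqrt_pos.2 (by positivity)
  have hsplit : Ioo (0:ℝ) (Real.sqrt (x*y)) ∪ Ici (Real.sqrt (x*y)) = Ioi 0 := by
    rw [Ioo_union_Ici_eq_Ioi hG]
  rw [← hsplit, setIntegral_union (by simp [Set.disjoint_left]) measurableSet_Ici
    (hint.mono_set (by rw [← hsplit]; exact subset_union_left))
    (hint.mono_set (by rw [← hsplit]; exact subset_union_right)),
    integral_Ici_eq_integral_Ioi, Ghalf hx hy]
  ring

lemma image_gauss {x y : ℝ} (hx : 0 < x) (hy : 0 < y) :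
    (fun t => (t - x*y/t)/2) '' Ioi (Real.sqrt (x*y)) = Ioi 0 := by
  have hG : 0 < Real.sqrt (x*y) := Real.sqrt_pos.2 (by positivity)
  have hGG : Real.sqrt (x*y) * Real.sqrt (x*y) = x * y :=
    Real.mul_self_sqrt (by positivity)
  ext u
  constructor
  · rintro ⟨t, ht, rfl⟩
    have ht' : Real.sqrt (x*y) < t := ht
    have ht0 : 0 < t := hG.trans ht'
    show 0 < (t - x*y/t)/2
    have : x*y/t < t := by rw [div_lt_iff₀ ht0]; nlinarith
    linarith
  · intro hu
    have hu' : 0 < u := hu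
    have hs : 0 < Real.sqrt (u^2 + x*y) := Real.sqrt_pos.2 (by positivity)
    have hss : Real.sqrt (u^2 + x*y) * Real.sqrt (u^2 + x*y) = u^2 + x*y :=
      Real.mul_self_sqrt (by positivity)
    set t := u + Real.sqrt (u^2 + x*y) with hts
    have ht0 : 0 < t := by positivity
    have htG : Real.sqrt (x*y) < t := by
      have : Real.sqrt (x*y) ≤ Real.sqrt (u^2 + x*y) := Real.sqrt_le_sqrt (by nlinarith)
      linarith
    refine ⟨t, htG, ?_⟩
    show (t - x*y/t)/2 = u
    field_simp
    nlinarith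

lemma Tstep {x y : ℝ} (hx : 0 < x) (hy : 0 < y) :
    (∫ t in Ioi (0:ℝ), Gker ((x+y)/2) (Real.sqrt (x*y)) t) = ∫ t in Ioi (0:ℝ), Gker x y t := by
  have hG : 0 < Real.sqrt (x*y) := Real.sqrt_pos.2 (by positivity)
  have hGG : Real.sqrt (x*y) ^ 2 = x * y := Real.sq_sqrt (by positivity)
  conv_lhs => rw [← image_gauss hx hy]
  rw [integral_image_eq_integral_abs_deriv_smul measurableSet_Ioi
    (f' := fun t => (1 + x*y/t^2)/2) ?_ ?_ _]
  · rw [Ioi_split hx hy]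
    rw [show (2:ℝ) * ∫ t in Ioi (Real.sqrt (x*y)), Gker x y t
        = ∫ t in Ioi (Real.sqrt (x*y)), 2 * Gker x y t by rw [integral_const_mul]]
    apply setIntegral_congr_fun measurableSet_Ioi
    intro t ht
    have ht0 : 0 < t := hG.trans ht
    have hP : (0:ℝ) < (t^2+x^2)*(t^2+y^2) := by positivity
    have kA : ((t - x*y/t)/2)^2 + ((x+y)/2)^2 = ((t^2+x^2)*(t^2+y^2))/(4*t^2) := by
      field_simp; ring
    have kG : ((t - x*y/t)/2)^2 + (Real.sqrt (x*y))^2 = ((t^2+x*y)/(2*t))^2 := by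
      rw [hGG]; field_simp; ring
    have k3 : ((t^2+x^2)*(t^2+y^2))/(4*t^2) * (((t^2+x*y)/(2*t))^2)
        = ((t^2+x^2)*(t^2+y^2)) * ((t^2+x*y)/(4*t^2))^2 := by
      field_simp; ring
    have hQ : (0:ℝ) < (t^2+x*y)/(4*t^2) := by positivity
    simp only [Gker, smul_eq_mul, kA, kG, k3]
    rw [Real.sqrt_mul hP.le, Real.sqrt_sq hQ.le]
    have hsP : 0 < Real.sqrt ((t^2+x^2)*(t^2+y^2)) := Real.sqrt_pos.2 hP
    rw [abs_of_pos (by positivity)]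
    field_simp
    ring
  · intro t ht
    have ht0 : 0 < t := hG.trans ht
    have h1 : HasDerivAt (fun t => x*y/t) (-(x*y)/t^2) t := by
      have := (hasDerivAt_inv ht0.ne').const_mul (x*y)
      simpa [div_eq_mul_inv, neg_div, mul_comm, mul_assoc] using this
    have h2 : HasDerivAt (fun t => (t - x*y/t)/2) ((1 - -(x*y)/t^2)/2) t :=
      ((hasDerivAt_id t).sub h1).div_const 2
    have : (1 - -(x*y)/t^2)/2 = (1 + x*y/t^2)/2 := by ring
    rw [this] at h2
    exact h2.hasDerivWithinAt
  · intro t1 h1 t2 h2 h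
    have ht1 : 0 < t1 := hG.trans h1
    have ht2 : 0 < t2 := hG.trans h2
    have h1' : Real.sqrt (x*y) < t1 := h1
    have h2' : Real.sqrt (x*y) < t2 := h2
    have hGG' : Real.sqrt (x*y) * Real.sqrt (x*y) = x*y := by nlinarith
    field_simp at h
    nlinarith [mul_pos ht1 ht2, sq_nonneg (t1 - t2), sq_nonneg (t1 + t2)]

lemma Jstep {x y : ℝ} (hx : 0 < x) (hy : 0 < y) :
    Jint ((x+y)/2) (Real.sqrt (x*y)) = Jint x y := by
  have hA : 0 < (x+y)/2 := by linarith
  have hG : 0 < Real.sqrt (x*y) := Real.sqrt_pos.2 (by positivity)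
  rw [← JT hA hG, ← JT hx hy, Tstep hx hy]

lemma Jbounds {x y : ℝ} (hy : 0 < y) (hxy : y ≤ x) :
    π/(2*x) ≤ Jint x y ∧ Jint x y ≤ π/(2*y) := by
  have hx : 0 < x := hy.trans_le hxy
  have hvol : (volume (Ioo (0:ℝ) (π/2))).toReal = π/2 := by
    rw [Real.volume_Ioo, ENNReal.toReal_ofReal (by linarith [Real.pi_pos])]
    ring
  have hbound : ∀ θ ∈ Ioo (0:ℝ) (π/2), x⁻¹ ≤ Fker x y θ ∧ Fker x y θ ≤ y⁻¹ := by
    intro θ _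
    have hpy : Real.sin θ ^ 2 + Real.cos θ ^ 2 = 1 := Real.sin_sq_add_cos_sq θ
    have hy2x2 : y^2 ≤ x^2 := by nlinarith
    have hcsq : (0:ℝ) ≤ Real.cos θ^2 := sq_nonneg _
    have hssq : (0:ℝ) ≤ Real.sin θ^2 := sq_nonneg _
    have hyy : 0 < y^2 := by positivity
    have hkey := mul_le_mul_of_nonneg_right hy2x2 hcsq
    have hP : 0 < x^2 * Real.cos θ^2 + y^2 * Real.sin θ^2 := by nlinarith
    have hlow : y ≤ Real.sqrt (x^2 * Real.cos θ^2 + y^2 * Real.sin θ^2) :=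
      (Real.le_sqrt hy.le hP.le).2 (by nlinarith)
    have hhigh : Real.sqrt (x^2 * Real.cos θ^2 + y^2 * Real.sin θ^2) ≤ x := by
      have h := Real.sqrt_le_sqrt (show x^2 * Real.cos θ^2 + y^2 * Real.sin θ^2 ≤ x^2 by nlinarith)
      rwa [Real.sqrt_sq hx.le] at h
    have hs : 0 < Real.sqrt (x^2 * Real.cos θ^2 + y^2 * Real.sin θ^2) := lt_of_lt_of_le hy hlow
    constructor
    · exact inv_anti₀ hs hhigh
    · exact inv_anti₀ hy hlow
  constructor
  · calc π/(2*x) = ∫ _θ in Ioo (0:ℝ) (π/2), x⁻¹ := by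
          rw [setIntegral_const, smul_eq_mul, measureReal_def, hvol]; field_simp
    _ ≤ Jint x y := by
          apply setIntegral_mono_on (integrableOn_const (by
            rw [Real.volume_Ioo]; exact ENNReal.ofReal_ne_top)) (Fker_integrable hx hy)
            measurableSet_Ioo
          exact fun θ hθ => (hbound θ hθ).1
  · calc Jint x y ≤ ∫ _θ in Ioo (0:ℝ) (π/2), y⁻¹ := by
          apply setIntegral_mono_on (Fker_integrable hx hy) (integrableOn_const (by
            rw [Real.volume_Ioo]; exact ENNReal.ofReal_ne_top)) measurableSet_Ioo
          exact fun θ hθ => (hbound θ hθ).2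
    _ = π/(2*y) := by rw [setIntegral_const, smul_eq_mul, measureReal_def, hvol]; field_simp

open Filter in
theorem agm_elliptic_integral (φ : ℝ) (hφ : 0 < φ) (hφ' : φ < Real.pi / 2)
    (a b : ℕ → ℝ) (ha0 : a 0 = 1) (hb0 : b 0 = Real.cos φ)
    (ha : ∀ j, a (j + 1) = (a j + b j) / 2)
    (hb : ∀ j, b (j + 1) = Real.sqrt (a j * b j))
    (L : ℝ) (hLa : Tendsto a atTop (nhds L)) (hLb : Tendsto b atTop (nhds L)) :
    2 * L * ∫ θ in (0:ℝ)..(Real.pi / 2),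
        (1 - Real.sin φ ^ 2 * Real.sin θ ^ 2) ^ (-(1/2 : ℝ)) = Real.pi := by
  have hcos : 0 < Real.cos φ := Real.cos_pos_of_mem_Ioo ⟨by linarith [Real.pi_pos], hφ'⟩
  -- the interval integral equals Jint 1 (cos φ)
  have hK : (∫ θ in (0:ℝ)..(Real.pi / 2),
      (1 - Real.sin φ ^ 2 * Real.sin θ ^ 2) ^ (-(1/2 : ℝ))) = Jint 1 (Real.cos φ) := by
    rw [intervalIntegral.integral_of_le (by positivity), integral_Ioc_eq_integral_Ioo, Jint]
    apply setIntegral_congr_fun measurableSet_Ioo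
    intro θ ⟨h1, h2⟩
    have hpyφ : Real.sin φ ^ 2 + Real.cos φ ^ 2 = 1 := Real.sin_sq_add_cos_sq φ
    have hpyθ : Real.sin θ ^ 2 + Real.cos θ ^ 2 = 1 := Real.sin_sq_add_cos_sq θ
    have hcθ : 0 < Real.cos θ := Real.cos_pos_of_mem_Ioo ⟨by linarith [Real.pi_pos], h2⟩
    have heq : 1 - Real.sin φ ^ 2 * Real.sin θ ^ 2
        = 1^2 * Real.cos θ^2 + (Real.cos φ)^2 * Real.sin θ^2 := by nlinarith
    have hz : 0 < 1 - Real.sin φ ^ 2 * Real.sin θ ^ 2 := by nlinarith [sq_nonneg (Real.sin θ), sq_nonneg (Real.cos φ * Real.sin θ)]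
    show (1 - Real.sin φ ^ 2 * Real.sin θ ^ 2) ^ (-(1/2:ℝ)) = Fker 1 (Real.cos φ) θ
    rw [Real.rpow_neg hz.le, ← Real.sqrt_eq_rpow, Fker, heq]
  have hab : ∀ j, 0 < b j ∧ b j ≤ a j := by
    intro j; induction j with
    | zero => rw [ha0, hb0]; exact ⟨hcos, Real.cos_le_one φ⟩
    | succ j ih =>
      obtain ⟨hbj, hba⟩ := ih
      have haj : 0 < a j := lt_of_lt_of_le hbj hba
      constructor
      · rw [hb]; positivity
      · rw [ha, hb]
        have h1 : Real.sqrt (a j * b j) ≤ Real.sqrt (((a j + b j)/2)^2) :=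
          Real.sqrt_le_sqrt (by nlinarith)
        rwa [Real.sqrt_sq (by linarith)] at h1
  have hconst : ∀ j, Jint (a j) (b j) = Jint 1 (Real.cos φ) := by
    intro j; induction j with
    | zero => rw [ha0, hb0]
    | succ j ih =>
      obtain ⟨hbj, hba⟩ := hab j
      have haj : 0 < a j := lt_of_lt_of_le hbj hba
      rw [ha, hb, Jstep haj hbj, ih]
  have hbmono : ∀ j, Real.cos φ ≤ b j := by
    intro j; induction j with
    | zero => rw [hb0]
    | succ j ih =>
      obtain ⟨hbj, hba⟩ := hab j
      have hstep : b j ≤ b (j+1) := by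
        rw [hb]
        have h := Real.sqrt_le_sqrt (show b j * b j ≤ a j * b j by nlinarith)
        rwa [Real.sqrt_mul_self hbj.le] at h
      linarith
  have hL : 0 < L := lt_of_lt_of_le hcos (ge_of_tendsto' hLb hbmono)
  set K := Jint 1 (Real.cos φ) with hKdef
  have hlow : ∀ j, π/(2 * a j) ≤ K := fun j => (hconst j) ▸ (Jbounds (hab j).1 (hab j).2).1
  have hhigh : ∀ j, K ≤ π/(2 * b j) := fun j => (hconst j) ▸ (Jbounds (hab j).1 (hab j).2).2
  have hta : Tendsto (fun j => π/(2 * a j)) atTop (nhds (π/(2 * L))) :=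
    tendsto_const_nhds.div (tendsto_const_nhds.mul hLa) (mul_pos two_pos hL).ne'
  have htb : Tendsto (fun j => π/(2 * b j)) atTop (nhds (π/(2 * L))) :=
    tendsto_const_nhds.div (tendsto_const_nhds.mul hLb) (mul_pos two_pos hL).ne'
  have h1 : π/(2*L) ≤ K := le_of_tendsto hta (Eventually.of_forall hlow)
  have h2 : K ≤ π/(2*L) := ge_of_tendsto htb (Eventually.of_forall hhigh)
  rw [hK, le_antisymm h2 h1]
  field_simp
end
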